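/- Let (μ^t, R^t) and (μ̄^t, R̄^t) be two equivalent 1-parameter formal deformations of a Rota-Baxter family BiHom-Ω-associative algebra (A, μ, R, p, q) of weight λ, via a formal isomorphism ψ^t_ω = Σ ψ^i_ω t^i with ψ⁰ = id. Then their infinitesimals satisfy μ̄¹_{α,β} − μ¹_{α,β} = δ¹_Alg(ψ¹)_{α,β} and R̄¹_ω − R¹_ω = −Φ¹(ψ¹)_ω; hence the infinitesimals define the same cohomology class in H²_{RBFA_λ}(A). -/

import Mathlib

open scoped BigOperators

section

variable {k Ω A : Type*} [CommRing k] [Monoid Ω] [AddCommGroup A] [Module k A]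

/-- A 1-parameter formal deformation of a Rota-Baxter family
BiHom-`Ω`-associative algebra `(A, mul, R, p, q)` of weight `λ`. -/
def IsFormalDeformation (lam : k)
    (mul : Ω → Ω → A →ₗ[k] A →ₗ[k] A) (R p q : Ω → A →ₗ[k] A)
    (μi : ℕ → Ω → Ω → A →ₗ[k] A →ₗ[k] A) (Ri : ℕ → Ω → A →ₗ[k] A) : Prop :=
  μi 0 = mul ∧ Ri 0 = R ∧
  (∀ i α β x y, p (α * β) (μi i α β x y) = μi i α β (p α x) (p β y)) ∧
  (∀ i α β x y, q (α * β) (μi i α β x y) = μi i α β (q α x) (q β y)) ∧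
  (∀ i ω x, p ω (Ri i ω x) = Ri i ω (p ω x)) ∧
  (∀ i ω x, q ω (Ri i ω x) = Ri i ω (q ω x)) ∧
  (∀ (n : ℕ) (α β γ : Ω) (x y z : A),
    ∑ ij ∈ Finset.HasAntidiagonal.antidiagonal n, μi ij.1 (α * β) γ (μi ij.2 α β x y) (q γ z)
      = ∑ ij ∈ Finset.HasAntidiagonal.antidiagonal n, μi ij.1 α (β * γ) (p α x) (μi ij.2 β γ y z)) ∧
  (∀ (n : ℕ) (α β : Ω) (x y : A),
    ∑ ij ∈ Finset.HasAntidiagonal.antidiagonal n, ∑ kl ∈ Finset.HasAntidiagonal.antidiagonal ij.2,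
        μi ij.1 α β (Ri kl.1 α x) (Ri kl.2 β y)
      = (∑ ij ∈ Finset.HasAntidiagonal.antidiagonal n, ∑ kl ∈ Finset.HasAntidiagonal.antidiagonal ij.2,
          Ri ij.1 (α * β) (μi kl.1 α β x (Ri kl.2 β y)))
        + (∑ ij ∈ Finset.HasAntidiagonal.antidiagonal n, ∑ kl ∈ Finset.HasAntidiagonal.antidiagonal ij.2,
            Ri ij.1 (α * β) (μi kl.1 α β (Ri kl.2 α x) y))
        + lam • ∑ ij ∈ Finset.HasAntidiagonal.antidiagonal n, Ri ij.1 (α * β) (μi ij.2 α β x y))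

/-- If two 1-parameter formal deformations `(μ, R)` and
`(ν, S)` of a Rota-Baxter family BiHom-`Ω`-associative algebra are equivalent via
a formal isomorphism `ψ^t` with `ψ⁰ = id`, then their infinitesimals satisfy
`ν¹ − μ¹ = δ¹_Alg(ψ¹)` and `S¹ − R¹ = −Φ¹(ψ¹)`; in particular they define the
same cohomology class. -/
theorem equivalent_deformations_infinitesimals (lam : k)
    (mul : Ω → Ω → A →ₗ[k] A →ₗ[k] A) (R p q : Ω → A →ₗ[k] A)
    (μi νi : ℕ → Ω → Ω → A →ₗ[k] A →ₗ[k] A) (Ri Si : ℕ → Ω → A →ₗ[k] A)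
    (hμ : IsFormalDeformation lam mul R p q μi Ri)
    (hν : IsFormalDeformation lam mul R p q νi Si)
    -- the formal isomorphism `ψ^t = Σ ψ^i t^i`, `ψ⁰ = id`
    (ψi : ℕ → Ω → A →ₗ[k] A)
    (hψ0 : ψi 0 = fun _ => LinearMap.id)
    (hψp : ∀ i ω x, ψi i ω (p ω x) = p ω (ψi i ω x))
    (hψq : ∀ i ω x, ψi i ω (q ω x) = q ω (ψi i ω x))
    -- `ψ^t ∘ ν^t = μ^t ∘ (ψ^t ⊗ ψ^t)` coefficientwise
    (hmul : ∀ (n : ℕ) (α β : Ω) (x y : A),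
      ∑ ij ∈ Finset.HasAntidiagonal.antidiagonal n, ψi ij.1 (α * β) (νi ij.2 α β x y)
        = ∑ ij ∈ Finset.HasAntidiagonal.antidiagonal n, ∑ kl ∈ Finset.HasAntidiagonal.antidiagonal ij.2,
            μi ij.1 α β (ψi kl.1 α x) (ψi kl.2 β y))
    -- `ψ^t ∘ S^t = R^t ∘ ψ^t` coefficientwise
    (hR : ∀ (n : ℕ) (ω : Ω) (x : A),
      ∑ ij ∈ Finset.HasAntidiagonal.antidiagonal n, ψi ij.1 ω (Si ij.2 ω x)
        = ∑ ij ∈ Finset.HasAntidiagonal.antidiagonal n, Ri ij.1 ω (ψi ij.2 ω x)) :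
    (∀ (α β : Ω) (a b : A),
      νi 1 α β a b - μi 1 α β a b
        = mul α β a (ψi 1 β b) + mul α β (ψi 1 α a) b
          - ψi 1 (α * β) (mul α β a b)) ∧
    (∀ (ω : Ω) (a : A),
      Si 1 ω a - Ri 1 ω a = -(ψi 1 ω (R ω a) - R ω (ψi 1 ω a))) := by
  obtain ⟨hμ0, hR0, -⟩ := hμ
  obtain ⟨hν0, hS0, -⟩ := hν
  have had1 : (Finset.HasAntidiagonal.antidiagonal 1 : Finset (ℕ × ℕ)) = {(0,1),(1,0)} := rfl
  have had0 : (Finset.HasAntidiagonal.antidiagonal 0 : Finset (ℕ × ℕ)) = {(0,0)} := rfl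
  constructor
  · intro α β a b
    have h := hmul 1 α β a b
    rw [had1, Finset.sum_pair (by decide), Finset.sum_pair (by decide)] at h
    simp only [had1, had0, Finset.sum_pair (show ((0:ℕ),(1:ℕ)) ≠ (1,0) by decide),
      Finset.sum_singleton, hψ0, hμ0, hν0, LinearMap.id_coe, id_eq] at h
    rw [sub_eq_sub_iff_add_eq_add]
    exact h
  · intro ω a
    have h := hR 1 ω a
    rw [had1, Finset.sum_pair (by decide), Finset.sum_pair (by decide)] at h
    simp only [hψ0, hR0, hS0, LinearMap.id_coe, id_eq] at h
    rw [neg_sub, sub_eq_sub_iff_add_eq_add]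
    exact h

end
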